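/- arXiv:1310.2346 — 2 statements merged into one kernel-verified Lean document; each statement's English description precedes it below -/
import Mathlib

section
/- A real-valued logic L satisfies P2 if and only if it satisfies P2', if and only if it satisfies P2''. -/
open Set

noncomputable section

/-- The real unit interval `[0,1]` as a subset of `ℝ`. -/
def I01 : Set ℝ := Set.Icc 0 1

/-- A continuous t-norm on `[0,1]`. -/
structure ContTNorm where
  mul : ℝ → ℝ → ℝ
  maps_to : ∀ x ∈ I01, ∀ y ∈ I01, mul x y ∈ I01
  continuousOn : ContinuousOn (fun p : ℝ × ℝ => mul p.1 p.2) (I01 ×ˢ I01)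
  assoc : ∀ x ∈ I01, ∀ y ∈ I01, ∀ z ∈ I01, mul (mul x y) z = mul x (mul y z)
  comm : ∀ x ∈ I01, ∀ y ∈ I01, mul x y = mul y x
  mono : ∀ a ∈ I01, ∀ b ∈ I01, ∀ c ∈ I01, b ≤ c → mul a b ≤ mul a c
  one_mul' : ∀ x ∈ I01, mul 1 x = x

/-- The residuum of a t-norm: `x →* y := sup { c ∈ [0,1] | x * c ≤ y }`. -/
def resid (t : ContTNorm) (x y : ℝ) : ℝ :=
  sSup {c | c ∈ I01 ∧ t.mul x c ≤ y}

/-- An algebra of truth values for the t-norm `t`: a subset of `[0,1]` containing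
`0` and `1` and closed under `t.mul` and its residuum. -/
structure TruthAlg (t : ContTNorm) where
  carrier : Set ℝ
  subset : carrier ⊆ I01
  zero_mem : (0:ℝ) ∈ carrier
  one_mem : (1:ℝ) ∈ carrier
  mul_mem : ∀ x ∈ carrier, ∀ y ∈ carrier, t.mul x y ∈ carrier
  resid_mem : ∀ x ∈ carrier, ∀ y ∈ carrier, resid t x y ∈ carrier

/-- Propositional formulas over countably many variables with `&`, `→`, `⊥`. -/
inductive Formula : Type
  | var : ℕ → Formula
  | bot : Formula
  | conj : Formula → Formula → Formula
  | impl : Formula → Formula → Formula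

/-- `α ↔ β := (α → β) & (β → α)`. -/
def Formula.iff (a b : Formula) : Formula := .conj (.impl a b) (.impl b a)

/-- The valuation determined by an assignment `v` of reals to the variables. -/
def eval (t : ContTNorm) (v : ℕ → ℝ) : Formula → ℝ
  | .var i => v i
  | .bot => 0
  | .conj a b => t.mul (eval t v a) (eval t v b)
  | .impl a b => resid t (eval t v a) (eval t v b)

/-- A valuation into `(T, t)` is (identified with) an assignment of values of `T`
to the propositional variables. -/
def IsValuation (t : ContTNorm) (T : TruthAlg t) (v : ℕ → ℝ) : Prop :=
  ∀ i, v i ∈ T.carrier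

/-- The logic induced by `(T, t)`: all formulas true to degree 1 under every valuation. -/
def Taut (t : ContTNorm) (T : TruthAlg t) : Set Formula :=
  {α | ∀ v : ℕ → ℝ, IsValuation t T v → eval t v α = 1}

/-- Principle P1. -/
def P1 (L : Set Formula) : Prop :=
  ∀ (t : ContTNorm) (T : TruthAlg t), Taut t T = L →
    ∀ α β : Formula,
      (Formula.iff α β ∈ L ↔
        ∀ v : ℕ → ℝ, IsValuation t T v → (eval t v α = 1 ↔ eval t v β = 1))

/-- Principle P2. -/
def P2 (L : Set Formula) : Prop :=
  ∀ (t : ContTNorm) (T : TruthAlg t), Taut t T = L →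
    ∀ v w : ℕ → ℝ, IsValuation t T v → IsValuation t T w → v ≠ w →
      ∃ α : Formula, 0 < eval t v α ∧ eval t w α = 0

/-- The Gödel t-norm: minimum. -/
def minT : ContTNorm where
  mul := fun x y => min x y
  maps_to := by
    rintro x ⟨hx0, hx1⟩ y ⟨hy0, hy1⟩
    exact ⟨le_min hx0 hy0, min_le_of_left_le hx1⟩
  continuousOn := (continuous_fst.min continuous_snd).continuousOn
  assoc := fun x _ y _ z _ => min_assoc x y z
  comm := fun x _ y _ => min_comm x y
  mono := fun a _ b _ c _ h => min_le_min le_rfl h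
  one_mul' := by rintro x ⟨hx0, hx1⟩; exact min_eq_right hx1

/-- The Łukasiewicz t-norm: `x ⊙ y = max 0 (x + y - 1)`. -/
def lukT : ContTNorm where
  mul := fun x y => max 0 (x + y - 1)
  maps_to := by
    rintro x ⟨hx0, hx1⟩ y ⟨hy0, hy1⟩
    exact ⟨le_max_left _ _, max_le zero_le_one (by linarith)⟩
  continuousOn :=
    (continuous_const.max ((continuous_fst.add continuous_snd).sub continuous_const)).continuousOn
  assoc := by
    rintro x ⟨hx0, hx1⟩ y ⟨hy0, hy1⟩ z ⟨hz0, hz1⟩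
    simp only [max_def]
    split_ifs <;> linarith
  comm := by intro x _ y _; rw [add_comm]
  mono := by
    rintro a _ b _ c _ h
    exact max_le_max le_rfl (by linarith)
  one_mul' := by
    rintro x ⟨hx0, hx1⟩
    try dsimp only
    rw [show (1:ℝ) + x - 1 = x by ring, max_eq_right hx0]

/-- The product t-norm: ordinary multiplication. -/
def prodT : ContTNorm where
  mul := fun x y => x * y
  maps_to := by
    rintro x ⟨hx0, hx1⟩ y ⟨hy0, hy1⟩
    exact ⟨mul_nonneg hx0 hy0, by nlinarith⟩
  continuousOn := (continuous_fst.mul continuous_snd).continuousOn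
  assoc := fun x _ y _ z _ => mul_assoc x y z
  comm := fun x _ y _ => mul_comm x y
  mono := by rintro a ⟨ha0, _⟩ b _ c _ h; exact mul_le_mul_of_nonneg_left h ha0
  one_mul' := fun x _ => one_mul x

lemma ContTNorm.mul_zero' (t : ContTNorm) {x : ℝ} (hx : x ∈ I01) : t.mul x 0 = 0 := by
  have h01 : (0:ℝ) ∈ I01 := ⟨le_rfl, zero_le_one⟩
  have h11 : (1:ℝ) ∈ I01 := ⟨zero_le_one, le_rfl⟩
  have h1 : t.mul x 0 = t.mul 0 x := t.comm x hx 0 h01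
  have h2 : t.mul 0 x ≤ t.mul 0 1 := t.mono 0 h01 x hx 1 h11 hx.2
  have h3 : t.mul 0 1 = t.mul 1 0 := t.comm 0 h01 1 h11
  have h4 : t.mul 1 0 = 0 := t.one_mul' 0 h01
  have h5 : t.mul x 0 ∈ I01 := t.maps_to x hx 0 h01
  rw [h3, h4] at h2
  rw [h1] at h5 ⊢
  exact le_antisymm h2 h5.1

lemma resid_mem_I01 (t : ContTNorm) {x y : ℝ} (hx : x ∈ I01) (hy : y ∈ I01) :
    resid t x y ∈ I01 := by
  have h01 : (0:ℝ) ∈ I01 := ⟨le_rfl, zero_le_one⟩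
  have h0 : (0:ℝ) ∈ {c | c ∈ I01 ∧ t.mul x c ≤ y} :=
    ⟨h01, by rw [t.mul_zero' hx]; exact hy.1⟩
  have hbdd : BddAbove {c | c ∈ I01 ∧ t.mul x c ≤ y} := ⟨1, fun c hc => hc.1.2⟩
  constructor
  · exact le_csSup hbdd h0
  · exact csSup_le ⟨0, h0⟩ fun c hc => hc.1.2

/-- The full algebra of truth values `[0,1]` for a t-norm `t`. -/
def fullAlg (t : ContTNorm) : TruthAlg t where
  carrier := I01
  subset := le_rfl
  zero_mem := ⟨le_rfl, zero_le_one⟩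
  one_mem := ⟨zero_le_one, le_rfl⟩
  mul_mem := t.maps_to
  resid_mem := fun _ hx _ hy => resid_mem_I01 t hx hy

lemma resid_eq_one_of_le (t : ContTNorm) {x y : ℝ} (hx : x ∈ I01) (hy : y ∈ I01)
    (hxy : x ≤ y) : resid t x y = 1 := by
  have h11 : (1:ℝ) ∈ I01 := ⟨zero_le_one, le_rfl⟩
  have hmul : t.mul x 1 = x := by rw [t.comm x hx 1 h11]; exact t.one_mul' x hx
  have h1 : (1:ℝ) ∈ {c | c ∈ I01 ∧ t.mul x c ≤ y} := ⟨h11, by rw [hmul]; exact hxy⟩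
  have hbdd : BddAbove {c | c ∈ I01 ∧ t.mul x c ≤ y} := ⟨1, fun c hc => hc.1.2⟩
  exact le_antisymm (csSup_le ⟨1, h1⟩ fun c hc => hc.1.2) (le_csSup hbdd h1)

lemma resid_one_zero (t : ContTNorm) : resid t 1 0 = 0 := by
  have : {c | c ∈ I01 ∧ t.mul 1 c ≤ 0} = {0} := by
    ext c
    constructor
    · rintro ⟨hc, hle⟩
      have := t.one_mul' c hc
      have := hc.1
      simp only [Set.mem_singleton_iff]
      linarith [this, (t.one_mul' c hc) ▸ hle]
    · rintro rfl
      exact ⟨⟨le_rfl, zero_le_one⟩, by rw [t.mul_zero' ⟨zero_le_one, le_rfl⟩]⟩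
  rw [resid, this, csSup_singleton]

/-- The two-element algebra of truth values `{0,1}`. -/
def boolAlg (t : ContTNorm) : TruthAlg t where
  carrier := {0, 1}
  subset := by
    rintro x (rfl | rfl)
    · exact ⟨le_rfl, zero_le_one⟩
    · exact ⟨zero_le_one, le_rfl⟩
  zero_mem := Or.inl rfl
  one_mem := Or.inr rfl
  mul_mem := by
    have h01 : (0:ℝ) ∈ I01 := ⟨le_rfl, zero_le_one⟩
    have h11 : (1:ℝ) ∈ I01 := ⟨zero_le_one, le_rfl⟩
    rintro x (rfl | rfl) y (rfl | rfl)
    · exact Or.inl (t.mul_zero' h01)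
    · exact Or.inl (by rw [t.comm 0 h01 1 h11]; exact t.mul_zero' h11)
    · exact Or.inl (t.mul_zero' h11)
    · exact Or.inr (t.one_mul' 1 h11)
  resid_mem := by
    have h01 : (0:ℝ) ∈ I01 := ⟨le_rfl, zero_le_one⟩
    have h11 : (1:ℝ) ∈ I01 := ⟨zero_le_one, le_rfl⟩
    rintro x (rfl | rfl) y (rfl | rfl)
    · exact Or.inr (resid_eq_one_of_le t h01 h01 le_rfl)
    · exact Or.inr (resid_eq_one_of_le t h01 h11 zero_le_one)
    · exact Or.inl (resid_one_zero t)
    · exact Or.inr (resid_eq_one_of_le t h11 h11 le_rfl)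

/-- Classical logic: the logic induced by the two-element algebra `{0,1}`
(this is independent of the chosen continuous t-norm). -/
def ClassicalLogic : Set Formula := Taut minT (boolAlg minT)


/-- Principle P2'. -/
def P2' (L : Set Formula) : Prop :=
  ∀ (t : ContTNorm) (T : TruthAlg t), Taut t T = L →
    ∀ v w : ℕ → ℝ, IsValuation t T v → IsValuation t T w → v ≠ w →
      ∃ α : Formula, eval t v α < 1 ∧ eval t w α = 1

/-- Principle P2''. -/
def P2'' (L : Set Formula) : Prop :=
  ∀ (t : ContTNorm) (T : TruthAlg t), Taut t T = L →
    ∀ v w : ℕ → ℝ, IsValuation t T v → IsValuation t T w → v ≠ w →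
      ∃ α : Formula, eval t v α = 0 ∧ eval t w α = 1

lemma eval_mem (t : ContTNorm) (T : TruthAlg t) {v : ℕ → ℝ} (hv : IsValuation t T v) :
    ∀ β : Formula, eval t v β ∈ T.carrier
  | .var i => hv i
  | .bot => T.zero_mem
  | .conj a b => T.mul_mem _ (eval_mem t T hv a) _ (eval_mem t T hv b)
  | .impl a b => T.resid_mem _ (eval_mem t T hv a) _ (eval_mem t T hv b)

lemma mul_resid_le (t : ContTNorm) {x y : ℝ} (hx : x ∈ I01) (hy : y ∈ I01) :
    t.mul x (resid t x y) ≤ y := by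
  set S : Set ℝ := {c | c ∈ I01 ∧ t.mul x c ≤ y} with hS
  have hf : ContinuousOn (fun c => t.mul x c) I01 := by
    have := t.continuousOn.comp ((continuous_const.prodMk continuous_id).continuousOn
      (s := I01)) (fun c hc => Set.mk_mem_prod hx hc)
    exact this
  have hclosed : IsClosed S := by
    have h1 : IsClosed (I01 ∩ (fun c => t.mul x c) ⁻¹' Set.Iic y) :=
      hf.preimage_isClosed_of_isClosed isClosed_Icc isClosed_Iic
    have h2 : S = I01 ∩ (fun c => t.mul x c) ⁻¹' Set.Iic y := by
      ext c; simp [hS, Set.mem_inter_iff, Set.mem_preimage, Set.mem_Iic, Set.mem_setOf_eq]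
    rw [h2]; exact h1
  have h0S : (0:ℝ) ∈ S := ⟨⟨le_rfl, zero_le_one⟩, by rw [t.mul_zero' hx]; exact hy.1⟩
  have hbdd : BddAbove S := ⟨1, fun c hc => hc.1.2⟩
  have : sSup S ∈ S := hclosed.csSup_mem ⟨0, h0S⟩ hbdd
  exact this.2

lemma mul_one' (t : ContTNorm) {x : ℝ} (hx : x ∈ I01) : t.mul x 1 = x := by
  rw [t.comm x hx 1 ⟨zero_le_one, le_rfl⟩]; exact t.one_mul' x hx

lemma resid_zero_lt_one (t : ContTNorm) {x : ℝ} (hx : x ∈ I01) (hpos : 0 < x) :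
    resid t x 0 < 1 := by
  rcases lt_or_eq_of_le (resid_mem_I01 t hx ⟨le_rfl, zero_le_one⟩).2 with h | h
  · exact h
  · exfalso
    have := mul_resid_le t hx (⟨le_rfl, zero_le_one⟩ : (0:ℝ) ∈ I01)
    rw [h, mul_one' t hx] at this
    linarith

/-- Substitute a formula `γ` for every variable. -/
def substAll (γ : Formula) : Formula → Formula
  | .var _ => γ
  | .bot => .bot
  | .conj a b => .conj (substAll γ a) (substAll γ b)
  | .impl a b => .impl (substAll γ a) (substAll γ b)

lemma eval_substAll (t : ContTNorm) (v : ℕ → ℝ) (γ : Formula) :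
    ∀ β : Formula, eval t v (substAll γ β) = eval t (fun _ => eval t v γ) β
  | .var _ => rfl
  | .bot => rfl
  | .conj a b => by
      simp only [substAll, eval, eval_substAll t v γ a, eval_substAll t v γ b]
  | .impl a b => by
      simp only [substAll, eval, eval_substAll t v γ a, eval_substAll t v γ b]

lemma resid_zero_zero (t : ContTNorm) : resid t 0 0 = 1 :=
  resid_eq_one_of_le t ⟨le_rfl, zero_le_one⟩ ⟨le_rfl, zero_le_one⟩ le_rfl

/-- A real-valued logic satisfies P2 iff it satisfies P2', iff it satisfies P2''. -/
theorem P2_iff_P2'_iff_P2'' (L : Set Formula)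
    (hL : ∃ (t : ContTNorm) (T : TruthAlg t), Taut t T = L) :
    (P2 L ↔ P2' L) ∧ (P2' L ↔ P2'' L) := by
  have h01 : (0:ℝ) ∈ I01 := ⟨le_rfl, zero_le_one⟩
  -- P2 → P2'
  have h12 : P2 L → P2' L := by
    intro h t T hT v w hv hw hvw
    obtain ⟨α, hpos, hzero⟩ := h t T hT v w hv hw hvw
    refine ⟨Formula.impl α Formula.bot, ?_, ?_⟩
    · show resid t (eval t v α) 0 < 1
      exact resid_zero_lt_one t (T.subset (eval_mem t T hv α)) hpos
    · show resid t (eval t w α) 0 = 1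
      rw [hzero]; exact resid_zero_zero t
  -- P2' → P2''
  have h23 : P2' L → P2'' L := by
    intro h t T hT v w hv hw hvw
    obtain ⟨α, hlt, hone⟩ := h t T hT v w hv hw hvw
    set a : ℝ := eval t v α with ha
    have haT : a ∈ T.carrier := eval_mem t T hv α
    have hv1 : IsValuation t T (fun _ => (1:ℝ)) := fun _ => T.one_mem
    have hva : IsValuation t T (fun _ => a) := fun _ => haT
    have hne : (fun _ : ℕ => (1:ℝ)) ≠ (fun _ => a) := by
      intro hEq
      have := congrFun hEq 0
      rw [← this] at hlt
      exact lt_irrefl 1 hlt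
    obtain ⟨β, hβlt, hβone⟩ := h t T hT (fun _ => (1:ℝ)) (fun _ => a) hv1 hva hne
    -- eval at the constant-one valuation is Boolean
    have hbool : eval t (fun _ => (1:ℝ)) β ∈ ({0, 1} : Set ℝ) := by
      have : IsValuation t (boolAlg t) (fun _ => (1:ℝ)) := fun _ => Or.inr rfl
      exact eval_mem t (boolAlg t) this β
    have hβzero : eval t (fun _ => (1:ℝ)) β = 0 := by
      rcases hbool with h' | h'
      · exact h'
      · rw [h'] at hβlt; exact absurd hβlt (lt_irrefl 1)
    refine ⟨Formula.impl (substAll α β) Formula.bot, ?_, ?_⟩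
    · show resid t (eval t v (substAll α β)) 0 = 0
      rw [eval_substAll t v α β, ← ha, hβone]
      exact resid_one_zero t
    · show resid t (eval t w (substAll α β)) 0 = 1
      have : eval t w (substAll α β) = 0 := by
        rw [eval_substAll t w α β, hone, hβzero]
      rw [this]
      exact resid_zero_zero t
  -- P2'' → P2
  have h31 : P2'' L → P2 L := by
    intro h t T hT v w hv hw hvw
    obtain ⟨α, hz, ho⟩ := h t T hT w v hw hv (Ne.symm hvw)
    exact ⟨α, by rw [ho]; exact zero_lt_one, hz⟩
  -- P2'' → P2'
  have h32 : P2'' L → P2' L := by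
    intro h t T hT v w hv hw hvw
    obtain ⟨α, hz, ho⟩ := h t T hT v w hv hw hvw
    exact ⟨α, by rw [hz]; exact zero_lt_one, ho⟩
  exact ⟨⟨h12, fun h => h31 (h23 h)⟩, ⟨h23, h32⟩⟩

end
end

section
/- Product logic fails P2 over its standard algebra: there exist two distinct valuations μ ≠ ν into ([0,1],·) such that no formula α satisfies μ(α) > 0 and ν(α) = 0. -/
open Set

noncomputable section

lemma resid_prod_of_lt {x y : ℝ} (hx : x ∈ I01) (hy : y ∈ I01) (h : y < x) :
    resid prodT x y = y / x := by
  have hx0 : 0 < x := lt_of_le_of_lt hy.1 h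
  have hset : {c | c ∈ I01 ∧ prodT.mul x c ≤ y} = Set.Icc 0 (y / x) := by
    ext c
    simp only [Set.mem_setOf_eq, prodT, I01, Set.mem_Icc]
    constructor
    · rintro ⟨⟨hc0, _⟩, hle⟩
      exact ⟨hc0, (le_div_iff₀ hx0).mpr (by linarith [mul_comm x c])⟩
    · rintro ⟨hc0, hc1⟩
      have h1 : x * c ≤ y := by
        have := (le_div_iff₀ hx0).mp hc1
        linarith [mul_comm c x]
      refine ⟨⟨hc0, ?_⟩, h1⟩
      have : y / x ≤ 1 := by
        rw [div_le_one hx0]; exact h.le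
      linarith
  rw [resid, hset, csSup_Icc (div_nonneg hy.1 hx0.le)]

lemma eval_sq (v : ℕ → ℝ) (hv : ∀ i, v i ∈ I01) (α : Formula) :
    eval prodT (fun i => (v i)^2) α = (eval prodT v α)^2 ∧ eval prodT v α ∈ I01 := by
  induction α with
  | var i => exact ⟨rfl, hv i⟩
  | bot => exact ⟨by simp [eval], ⟨le_rfl, zero_le_one⟩⟩
  | conj a b ha hb =>
      refine ⟨?_, prodT.maps_to _ ha.2 _ hb.2⟩
      simp only [eval]
      rw [ha.1, hb.1]; show _ * _ = (_ * _)^2; ring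
  | impl a b ha hb =>
      refine ⟨?_, resid_mem_I01 prodT ha.2 hb.2⟩
      simp only [eval]
      rw [ha.1, hb.1]
      obtain ⟨ha0, ha1⟩ := ha.2
      obtain ⟨hb0, hb1⟩ := hb.2
      set x := eval prodT v a
      set y := eval prodT v b
      have hx2 : x^2 ∈ I01 := ⟨sq_nonneg x, by nlinarith⟩
      have hy2 : y^2 ∈ I01 := ⟨sq_nonneg y, by nlinarith⟩
      rcases le_or_gt x y with h | h
      · rw [resid_eq_one_of_le prodT hx2 hy2 (by nlinarith),
          resid_eq_one_of_le prodT ha.2 hb.2 h]; norm_num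
      · have h2 : y^2 < x^2 := by nlinarith
        rw [resid_prod_of_lt hx2 hy2 h2, resid_prod_of_lt ha.2 hb.2 h, div_pow]

/-- Product logic fails P2 over its standard algebra: there are two distinct
valuations into `([0,1], ·)` that no formula separates. -/
theorem product_fails_P2 :
    ∃ v w : ℕ → ℝ, IsValuation prodT (fullAlg prodT) v ∧
      IsValuation prodT (fullAlg prodT) w ∧ v ≠ w ∧
      ∀ α : Formula, ¬ (0 < eval prodT v α ∧ eval prodT w α = 0) := by
  have hv : ∀ _ : ℕ, ((1:ℝ)/2) ∈ I01 := fun _ => ⟨by norm_num, by norm_num⟩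
  refine ⟨fun _ : ℕ => (1/2:ℝ), fun _ : ℕ => ((1/2:ℝ))^2, fun i => hv i, ?_, ?_, ?_⟩
  · intro i; exact ⟨by norm_num, by norm_num⟩
  · intro h
    have := congrFun h 0
    norm_num at this
  · rintro α ⟨hpos, hzero⟩
    have := (eval_sq (fun _ : ℕ => (1/2:ℝ)) hv α).1
    rw [hzero] at this
    nlinarith [this.symm]

end
end
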